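/- Let q > 0, q ≠ 1, p ∈ ℕ, and n ≥ 2. Consider the Holstein-Primakoff operators for U_q[sl(3)] (n = 2) on F(2): E₁|l₁,l₂⟩ = √([l₁][p-l₁-l₂+1])|l₁-1,l₂⟩, E₂|l₁,l₂⟩ = √([l₁+1][l₂])|l₁+1,l₂-1⟩. Then the quantum Serre relation holds: E₁²E₂ - (q + q^{-1}) E₁E₂E₁ + E₂E₁² = 0, i.e. [E₁, [E₁, E₂]_q]_{q^{-1}} = 0 as operators on F(2). -/

import Mathlib

open Finsupp


noncomputable def qb (q x : ℝ) : ℝ := (q ^ x - q ^ (-x)) / (q - q⁻¹)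

lemma qb_zero (q : ℝ) : qb q 0 = 0 := by simp [qb]

lemma qb_nonneg {q : ℝ} (hq : 0 < q) {x : ℝ} (hx : 0 ≤ x) : 0 ≤ qb q x := by
  rcases lt_trichotomy q 1 with h | h | h
  · rw [qb, div_nonneg_iff]; right
    constructor
    · have := Real.rpow_le_rpow_of_exponent_ge hq h.le (neg_le_self hx)
      linarith
    · have : 1 < q⁻¹ := (one_lt_inv₀ hq).mpr h
      linarith
  · simp [qb, h]
  · apply div_nonneg
    · have := Real.rpow_le_rpow_of_exponent_le h.le (neg_le_self hx)
      linarith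
    · have : q⁻¹ < 1 := inv_lt_one_of_one_lt₀ h
      linarith

lemma qb_neg (q x : ℝ) : qb q (-x) = - qb q x := by
  simp only [qb, neg_neg, neg_div]
  ring_nf

lemma qb_nonpos {q : ℝ} (hq : 0 < q) {x : ℝ} (hx : x ≤ 0) : qb q x ≤ 0 := by
  have h := qb_nonneg hq (neg_nonneg.mpr hx)
  rw [qb_neg] at h; linarith

lemma qb_rec {q : ℝ} (hq : 0 < q) (x : ℝ) :
    qb q (x+1) + qb q (x-1) = (q+q⁻¹) * qb q x := by
  simp only [qb, ← add_div]
  rw [← mul_div_assoc]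
  congr 1
  have h1 : q ^ (x+1) = q ^ x * q := by
    rw [Real.rpow_add hq, Real.rpow_one]
  have h2 : q ^ (x-1) = q ^ x * q⁻¹ := by
    rw [show x - 1 = x + (-1) from by ring, Real.rpow_add hq, Real.rpow_neg_one]
  have h3 : q ^ (-(x+1)) = q ^ (-x) * q⁻¹ := by
    rw [show -(x+1) = -x + (-1) from by ring, Real.rpow_add hq, Real.rpow_neg_one]
  have h4 : q ^ (-(x-1)) = q ^ (-x) * q := by
    rw [show -(x-1) = -x + 1 from by ring, Real.rpow_add hq, Real.rpow_one]
  rw [h1, h2, h3, h4]; ring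

lemma master {q : ℝ} (hq : 0 < q) (P K M : ℝ) (hK : 0 ≤ K) (hM : 0 ≤ M) :
    Real.sqrt (qb q (K+2) * qb q (M+1)) *
      (Real.sqrt (qb q (K+2) * qb q (P-K-M-1)) * Real.sqrt (qb q (K+1) * qb q (P-K-M)))
    - (q+q⁻¹) * (Real.sqrt (qb q (K+1) * qb q (P-K-M-1)) *
        (Real.sqrt (qb q (K+1) * qb q (M+1)) * Real.sqrt (qb q (K+1) * qb q (P-K-M))))
    + Real.sqrt (qb q (K+1) * qb q (P-K-M-1)) *
        (Real.sqrt (qb q K * qb q (P-K-M)) * Real.sqrt (qb q K * qb q (M+1))) = 0 := by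
  rcases le_or_gt 0 (P-K-M-1) with hD | hD
  · have h0 : 0 ≤ qb q K := qb_nonneg hq hK
    have h1 : 0 ≤ qb q (K+1) := qb_nonneg hq (by linarith)
    have h2 : 0 ≤ qb q (K+2) := qb_nonneg hq (by linarith)
    have hb : 0 ≤ qb q (M+1) := qb_nonneg hq (by linarith)
    have hc : 0 ≤ qb q (P-K-M-1) := qb_nonneg hq hD
    have hd : 0 ≤ qb q (P-K-M) := qb_nonneg hq (by linarith)
    rw [Real.sqrt_mul h2, Real.sqrt_mul h2, Real.sqrt_mul h1, Real.sqrt_mul h1,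
      Real.sqrt_mul h1, Real.sqrt_mul h0, Real.sqrt_mul h0]
    have e0 := Real.sq_sqrt h0
    have e1 := Real.sq_sqrt h1
    have e2 := Real.sq_sqrt h2
    have key : qb q (K+2) - (q+q⁻¹) * qb q (K+1) + qb q K = 0 := by
      have := qb_rec hq (K+1)
      have hx : K + 1 + 1 = K + 2 := by ring
      have hy : K + 1 - 1 = K := by ring
      rw [hx, hy] at this
      linarith
    set s0 := Real.sqrt (qb q K)
    set s1 := Real.sqrt (qb q (K+1))
    set s2 := Real.sqrt (qb q (K+2))
    set sb := Real.sqrt (qb q (M+1))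
    set sc := Real.sqrt (qb q (P-K-M-1))
    set sd := Real.sqrt (qb q (P-K-M))
    linear_combination (s1*sb*sc*sd) * key + (s1*sb*sc*sd) * e2
      - (q+q⁻¹)*(s1*sb*sc*sd) * e1 + (s1*sb*sc*sd) * e0
  · have hc : qb q (P-K-M-1) ≤ 0 := qb_nonpos hq hD.le
    have h1 : 0 ≤ qb q (K+1) := qb_nonneg hq (by linarith)
    have h2 : 0 ≤ qb q (K+2) := qb_nonneg hq (by linarith)
    have z1 : Real.sqrt (qb q (K+2) * qb q (P-K-M-1)) = 0 :=
      Real.sqrt_eq_zero'.mpr (mul_nonpos_of_nonneg_of_nonpos h2 hc)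
    have z2 : Real.sqrt (qb q (K+1) * qb q (P-K-M-1)) = 0 :=
      Real.sqrt_eq_zero'.mpr (mul_nonpos_of_nonneg_of_nonpos h1 hc)
    rw [z1, z2]; ring
theorem holstein_primakoff_sl3_serre_relation (q : ℝ) (p : ℕ) (hq : 0 < q) (hq1 : q ≠ 1)
    (E1 E2 : ((ℕ × ℕ) →₀ ℂ) →ₗ[ℂ] ((ℕ × ℕ) →₀ ℂ))
    (hE10 : ∀ l2 : ℕ, E1 (single (0, l2) 1) = 0)
    (hE1 : ∀ l1 l2 : ℕ, E1 (single (l1 + 1, l2) 1) =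
      ((Real.sqrt (qb q ((l1 : ℝ) + 1) *
          qb q ((p : ℝ) - ((l1 : ℝ) + 1) - (l2 : ℝ) + 1)) : ℝ) : ℂ) • single (l1, l2) 1)
    (hE20 : ∀ l1 : ℕ, E2 (single (l1, 0) 1) = 0)
    (hE2 : ∀ l1 l2 : ℕ, E2 (single (l1, l2 + 1) 1) =
      ((Real.sqrt (qb q ((l1 : ℝ) + 1) * qb q ((l2 : ℝ) + 1)) : ℝ) : ℂ) •
        single (l1 + 1, l2) 1) :
    E1 ∘ₗ E1 ∘ₗ E2 - ((q + q⁻¹ : ℝ) : ℂ) • (E1 ∘ₗ E2 ∘ₗ E1) + E2 ∘ₗ E1 ∘ₗ E1 = 0 := by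
  apply Finsupp.lhom_ext
  rintro ⟨l1, l2⟩ b
  have hb : (single ((l1:ℕ), (l2:ℕ)) b : (ℕ×ℕ) →₀ ℂ) = b • single (l1, l2) 1 := by
    rw [Finsupp.smul_single, smul_eq_mul, mul_one]
  rw [hb]
  simp only [map_smul, LinearMap.add_apply, LinearMap.sub_apply, LinearMap.smul_apply,
    LinearMap.comp_apply, LinearMap.zero_apply, smul_zero]
  rw [show (0 : (ℕ×ℕ) →₀ ℂ) = b • 0 from (smul_zero b).symm]
  congr 1
  match l1, l2 with
  | l1, 0 =>
    match l1 with
    | 0 => simp only [hE10, hE20, map_smul, map_zero, smul_zero]; simp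
    | 1 => simp only [hE10, hE20, hE1, hE2, map_smul, map_zero, smul_zero]; simp
    | (k+2) => simp only [hE10, hE20, hE1, hE2, map_smul, map_zero, smul_zero]; simp
  | 0, (m+1) => simp only [hE10, hE20, hE1, hE2, map_smul, map_zero, smul_zero]; simp
  | (k+1), (m+1) =>
    match k with
    | 0 =>
      simp only [hE10, hE20, hE1, hE2, map_smul, map_zero, smul_zero]
      simp only [smul_smul, ← sub_smul, ← add_smul, add_zero]
      refine smul_eq_zero_of_left ?_ _
      norm_cast
      push_cast
      have H := master hq (p:ℝ) 0 (m:ℝ) le_rfl (by positivity)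
      simp only [qb_zero, zero_mul, Real.sqrt_zero, mul_zero, zero_add, add_zero] at H
      ring_nf at H ⊢
      linarith [H]
    | (j+1) =>
      simp only [hE10, hE20, hE1, hE2, map_smul, map_zero, smul_zero]
      simp only [smul_smul, ← sub_smul, ← add_smul]
      refine smul_eq_zero_of_left ?_ _
      norm_cast
      push_cast
      have H := master hq (p:ℝ) ((j:ℝ)+1) (m:ℝ) (by positivity) (by positivity)
      ring_nf at H ⊢
      linarith [H]
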